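/- There exists a natural number N such that for all n ≥ N, the graph S_n satisfies P_{S_n}(n² − 6n + 5)·P_{S_n}(n² − 6n + 7) > P_{S_n}(n² − 6n + 6)². That is, the number of proper colorings of S_n fails log-concavity at q = n² − 6n + 6 for all sufficiently large n, even though the maximum degree of S_n is n² − 1. -/

import Mathlib

/-- The nine (0-indexed) block pairs `(i,j)`, `i < j`, between which all edges of Seymour's
graph `H` are present; 1-indexed they are
`(1,2),(1,3),(2,3),(2,4),(3,4),(1,5),(3,5),(1,6),(2,6)`. -/
def seymourPairs : List (Fin 6 × Fin 6) :=
  [(0,1), (0,2), (1,2), (1,3), (2,3), (0,4), (2,4), (0,5), (1,5)]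

/-- Seymour's graph `H_n` on the vertex set `{1,…,6} × {1,…,n}` (six blocks of size `n`):
a vertex in block `i` is adjacent to a vertex in block `j` (for `i < j`) iff `(i,j)` is one of
the pairs `(1,2),(1,3),(2,3),(2,4),(3,4),(1,5),(3,5),(1,6),(2,6)`; no edges inside a block. -/
def seymourH (n : ℕ) : SimpleGraph (Fin 6 × Fin n) :=
  SimpleGraph.fromRel (fun x y => (x.1, y.1) ∈ seymourPairs)

instance (n : ℕ) : DecidableRel (seymourH n).Adj := fun x y =>
  decidable_of_iff' _ (SimpleGraph.fromRel_adj _ x y)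
/-- The graph obtained from `G` by adding `m` new vertices, each adjacent to every other
vertex (the other new vertices included). -/
def addDominating {V : Type*} (G : SimpleGraph V) (m : ℕ) : SimpleGraph (V ⊕ Fin m) where
  Adj x y :=
    match x, y with
    | Sum.inl u, Sum.inl v => G.Adj u v
    | Sum.inl _, Sum.inr _ => True
    | Sum.inr _, Sum.inl _ => True
    | Sum.inr i, Sum.inr j => i ≠ j
  symm := by
    refine ⟨?_⟩
    rintro (u | i) (v | j) h
    · exact G.symm.symm _ _ h
    · trivial
    · trivial
    · exact Ne.symm h
  loopless := by
    refine ⟨?_⟩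
    rintro (u | i) h
    · exact G.loopless.irrefl u h
    · exact h rfl

instance {V : Type*} (G : SimpleGraph V) [h : DecidableRel G.Adj] (m : ℕ) :
    DecidableRel (addDominating G m).Adj
  | Sum.inl u, Sum.inl v => h u v
  | Sum.inl _, Sum.inr _ => .isTrue trivial
  | Sum.inr _, Sum.inl _ => .isTrue trivial
  | Sum.inr i, Sum.inr j => inferInstanceAs (Decidable (i ≠ j))

/-- The graph `S_n` on `n²` vertices: Seymour's graph `H_n` on the `6n` vertices
`{1,…,6} × {1,…,n}`, together with `n² - 6n` additional vertices each adjacent to every other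
vertex of the graph. -/
def seymourS (n : ℕ) : SimpleGraph ((Fin 6 × Fin n) ⊕ Fin (n ^ 2 - 6 * n)) :=
  addDominating (seymourH n) (n ^ 2 - 6 * n)

/-! ### Auxiliary lemmas -/

open Finset

lemma SeyAux.pairs_ne : ∀ p ∈ seymourPairs, p.1 ≠ p.2 := by decide

lemma SeyAux.num72 : ∀ a b c : Fin 7, (a:ℕ) * b * c * (6 - (b:ℕ) - (c:ℕ)) *
    (6 - (a:ℕ) - (c:ℕ)) * (6 - (a:ℕ) - (b:ℕ)) ≤ 72 := by decide

lemma SeyAux.three_disj {T : Fin 6 → Finset (Fin 6)} {i j l : Fin 6}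
    (hij : Disjoint (T i) (T j)) (hil : Disjoint (T i) (T l)) (hjl : Disjoint (T j) (T l)) :
    (T i).card + (T j).card + (T l).card ≤ 6 := by
  have h1 : (T i ∪ T j ∪ T l).card = (T i).card + (T j).card + (T l).card := by
    rw [Finset.card_union_of_disjoint (Finset.disjoint_union_left.mpr ⟨hil, hjl⟩),
      Finset.card_union_of_disjoint hij]
  have h2 : (T i ∪ T j ∪ T l).card ≤ 6 := by
    have := Finset.card_le_card (Finset.subset_univ (T i ∪ T j ∪ T l))
    simpa using this
  omega

lemma SeyAux.prod_card_le (T : Fin 6 → Finset (Fin 6))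
    (h : ∀ i j : Fin 6, (i, j) ∈ seymourPairs → Disjoint (T i) (T j)) :
    ∏ i, (T i).card ≤ 72 := by
  have habc : (T 0).card + (T 1).card + (T 2).card ≤ 6 :=
    SeyAux.three_disj (h 0 1 (by decide)) (h 0 2 (by decide)) (h 1 2 (by decide))
  have hd : (T 1).card + (T 2).card + (T 3).card ≤ 6 :=
    SeyAux.three_disj (h 1 2 (by decide)) (h 1 3 (by decide)) (h 2 3 (by decide))
  have he : (T 0).card + (T 2).card + (T 4).card ≤ 6 :=
    SeyAux.three_disj (h 0 2 (by decide)) (h 0 4 (by decide)) (h 2 4 (by decide))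
  have hf : (T 0).card + (T 1).card + (T 5).card ≤ 6 :=
    SeyAux.three_disj (h 0 1 (by decide)) (h 0 5 (by decide)) (h 1 5 (by decide))
  set a := (T 0).card; set b := (T 1).card; set c := (T 2).card
  have key := SeyAux.num72 ⟨a, by omega⟩ ⟨b, by omega⟩ ⟨c, by omega⟩
  simp only [Fin.val_mk] at key
  rw [Fin.prod_univ_six]
  calc a * b * c * (T 3).card * (T 4).card * (T 5).card
      ≤ a * b * c * (6 - b - c) * (6 - a - c) * (6 - a - b) := by
        gcongr <;> omega
    _ ≤ 72 := key

/-- descFactorial-factorial identity specialized. -/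
lemma SeyAux.descF_fact (m k : ℕ) :
    Nat.factorial k * (m + k).descFactorial m = (m + k).factorial := by
  have h : m + k - m = k := by omega
  have := Nat.factorial_mul_descFactorial (n := m + k) (k := m) (by omega)
  rwa [h] at this

set_option maxRecDepth 100000 in
lemma SeyAux.pow_key {n : ℕ} (hn : 500 ≤ n) : 2 ^ 74 * 5184 ^ n ≤ 5832 ^ n := by
  obtain ⟨t, rfl⟩ : ∃ t, n = 500 + t := ⟨n - 500, by omega⟩
  rw [pow_add, pow_add, ← mul_assoc]
  exact Nat.mul_le_mul (Nat.le_of_ble_eq_true rfl) (Nat.pow_le_pow_left (by norm_num) t)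

/-- Upper bound on the number of 6-colorings of Seymour's graph. -/
lemma SeyAux.cardH6_le (n : ℕ) :
    Fintype.card ((seymourH n).Coloring (Fin 6)) ≤ 2 ^ 36 * 72 ^ n := by
  classical
  let VT := {T : Fin 6 → Finset (Fin 6) // ∀ i j : Fin 6, (i, j) ∈ seymourPairs →
    Disjoint (T i) (T j)}
  let F : (seymourH n).Coloring (Fin 6) → Σ T : VT, ∀ v : Fin 6 × Fin n, {y // y ∈ T.1 v.1} :=
    fun c => ⟨⟨fun i => Finset.image (fun u => c (i, u)) Finset.univ, by
        intro i j hij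
        rw [Finset.disjoint_left]
        rintro y hy1 hy2
        obtain ⟨u, -, hu⟩ := Finset.mem_image.mp hy1
        obtain ⟨u', -, hu'⟩ := Finset.mem_image.mp hy2
        have hne : (i, u) ≠ (j, u') := by
          intro hcontr
          exact SeyAux.pairs_ne (i, j) hij (congrArg Prod.fst hcontr)
        have hadj : (seymourH n).Adj (i, u) (j, u') :=
          (SimpleGraph.fromRel_adj _ _ _).mpr ⟨hne, Or.inl hij⟩
        exact c.valid hadj (hu.trans hu'.symm)⟩,
      fun v => ⟨c v, Finset.mem_image.mpr ⟨v.2, Finset.mem_univ _, by rfl⟩⟩⟩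
  have hinj : Function.Injective F := by
    intro c c' hcc
    have : ∀ v : Fin 6 × Fin n, c v = c' v := by
      intro v
      have := congrArg (fun s : Σ T : VT, ∀ v : Fin 6 × Fin n, {y // y ∈ T.1 v.1} =>
        (s.2 v : Fin 6)) hcc
      simpa [F] using this
    exact DFunLike.coe_injective (funext this)
  calc Fintype.card ((seymourH n).Coloring (Fin 6))
      ≤ Fintype.card (Σ T : VT, ∀ v : Fin 6 × Fin n, {y // y ∈ T.1 v.1}) :=
        Fintype.card_le_of_injective F hinj
    _ = ∑ T : VT, Fintype.card (∀ v : Fin 6 × Fin n, {y // y ∈ T.1 v.1}) :=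
        Fintype.card_sigma
    _ ≤ ∑ _T : VT, 2 ^ 0 * 72 ^ n := by
        apply Finset.sum_le_sum
        intro T _
        rw [Fintype.card_pi]
        have h1 : ∏ v : Fin 6 × Fin n, Fintype.card {y // y ∈ T.1 v.1}
            = ∏ i : Fin 6, ((T.1 i).card) ^ n := by
          have h0 : ∀ v : Fin 6 × Fin n, Fintype.card {y // y ∈ T.1 v.1} = (T.1 v.1).card :=
            fun v => Fintype.card_coe _
          simp only [h0]
          rw [Fintype.prod_prod_type]
          simp
        rw [h1, Finset.prod_pow]
        have := SeyAux.prod_card_le T.1 T.2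
        calc (∏ i, (T.1 i).card) ^ n ≤ 72 ^ n := Nat.pow_le_pow_left this n
          _ = 2 ^ 0 * 72 ^ n := by ring
    _ ≤ 2 ^ 36 * 72 ^ n := by
        rw [Finset.sum_const, Finset.card_univ, smul_eq_mul]
        have hcard : Fintype.card VT ≤ 2 ^ 36 := by
          calc Fintype.card VT ≤ Fintype.card (Fin 6 → Finset (Fin 6)) :=
                Fintype.card_subtype_le _
            _ = 2 ^ 36 := by
                rw [Fintype.card_fun]
                simp [Fintype.card_finset]
        calc Fintype.card VT * (2 ^ 0 * 72 ^ n) = Fintype.card VT * 72 ^ n := by ring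
          _ ≤ 2 ^ 36 * 72 ^ n := Nat.mul_le_mul_right _ hcard

/-- Lower bound for colorings of the dominated graph via a palette. -/
lemma SeyAux.lower_S (n m k q : ℕ) (hq : m + k = q) (pal : Fin 6 → Finset (Fin k))
    (hdis : ∀ i j : Fin 6, ((i, j) ∈ seymourPairs ∨ (j, i) ∈ seymourPairs) →
      Disjoint (pal i) (pal j)) :
    q.descFactorial m * (∏ i, (pal i).card) ^ n ≤
      Fintype.card ((addDominating (seymourH n) m).Coloring (Fin q)) := by
  classical
  have hscard : ∀ f : Fin m ↪ Fin q, ((Finset.univ.image ⇑f)ᶜ : Finset (Fin q)).card = k := by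
    intro f
    rw [Finset.card_compl, Finset.card_image_of_injective _ f.injective]
    simp [hq.symm]
  let Φ : ((Fin m ↪ Fin q) × (∀ v : Fin 6 × Fin n, {y // y ∈ pal v.1})) →
      (addDominating (seymourH n) m).Coloring (Fin q) := fun fx =>
    SimpleGraph.Coloring.mk
      (Sum.elim
        (fun v => ((Finset.univ.image ⇑fx.1)ᶜ).orderEmbOfFin (hscard fx.1) (fx.2 v).1)
        ⇑fx.1)
      (by
        obtain ⟨f, x⟩ := fx
        intro a b hadj
        match a, b with
        | Sum.inl v, Sum.inl w =>
          have h' : (seymourH n).Adj v w := hadj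
          simp only [seymourH, SimpleGraph.fromRel_adj] at h'
          intro hcontr
          simp only [Sum.elim_inl] at hcontr
          have hval : ((x v).1 : Fin k) = (x w).1 :=
            (((Finset.univ.image ⇑f)ᶜ).orderEmbOfFin (hscard f)).injective hcontr
          have hmem : ((x v).1 : Fin k) ∈ pal w.1 := hval ▸ (x w).2
          exact Finset.disjoint_left.mp (hdis v.1 w.1 h'.2) (x v).2 hmem
        | Sum.inl v, Sum.inr j =>
          intro hcontr
          simp only [Sum.elim_inl, Sum.elim_inr] at hcontr
          have hmem := Finset.orderEmbOfFin_mem ((Finset.univ.image ⇑f)ᶜ) (hscard f) (x v).1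
          rw [hcontr] at hmem
          exact (Finset.mem_compl.mp hmem)
            (Finset.mem_image.mpr ⟨j, Finset.mem_univ _, rfl⟩)
        | Sum.inr j, Sum.inl v =>
          intro hcontr
          simp only [Sum.elim_inl, Sum.elim_inr] at hcontr
          have hmem := Finset.orderEmbOfFin_mem ((Finset.univ.image ⇑f)ᶜ) (hscard f) (x v).1
          rw [← hcontr] at hmem
          exact (Finset.mem_compl.mp hmem)
            (Finset.mem_image.mpr ⟨j, Finset.mem_univ _, rfl⟩)
        | Sum.inr i, Sum.inr j =>
          have h' : i ≠ j := hadj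
          exact fun hcontr => h' (f.injective hcontr))
  have hinj : Function.Injective Φ := by
    rintro ⟨f, x⟩ ⟨f', x'⟩ h
    have hfun : ∀ z, (Φ (f, x)) z = (Φ (f', x')) z := fun z => DFunLike.congr_fun h z
    have hf : f = f' := Function.Embedding.ext fun j => hfun (Sum.inr j)
    subst hf
    have hx : x = x' := by
      funext v
      exact Subtype.ext
        ((((Finset.univ.image ⇑f)ᶜ).orderEmbOfFin (hscard f)).injective (hfun (Sum.inl v)))
    rw [hx]
  calc q.descFactorial m * (∏ i, (pal i).card) ^ n
      = Fintype.card ((Fin m ↪ Fin q) × (∀ v : Fin 6 × Fin n, {y // y ∈ pal v.1})) := by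
        rw [Fintype.card_prod, Fintype.card_embedding_eq, Fintype.card_fin, Fintype.card_fin,
          Fintype.card_pi]
        congr 1
        have h0 : ∀ v : Fin 6 × Fin n, Fintype.card {y // y ∈ pal v.1} = (pal v.1).card :=
          fun v => Fintype.card_coe _
        simp only [h0]
        rw [Fintype.prod_prod_type]
        simp [Finset.prod_pow]
    _ ≤ Fintype.card ((addDominating (seymourH n) m).Coloring (Fin q)) :=
        Fintype.card_le_of_injective Φ hinj

/-- Upper bound for colorings of the dominated graph with `m + 6` colors. -/
lemma SeyAux.upper_S (n m q : ℕ) (hq : m + 6 = q) :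
    Fintype.card ((addDominating (seymourH n) m).Coloring (Fin q)) ≤
      q.descFactorial m * (2 ^ 36 * 72 ^ n) := by
  classical
  let emb : (addDominating (seymourH n) m).Coloring (Fin q) → Fin m ↪ Fin q := fun c =>
    ⟨fun j => c (Sum.inr j), by
      intro i j hcij
      by_contra hne
      exact c.valid (show (addDominating (seymourH n) m).Adj (Sum.inr i) (Sum.inr j) from hne)
        hcij⟩
  have hscard : ∀ f : Fin m ↪ Fin q, ((Finset.univ.image ⇑f)ᶜ : Finset (Fin q)).card = 6 := by
    intro f
    rw [Finset.card_compl, Finset.card_image_of_injective _ f.injective]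
    simp [hq.symm]
  have hmem : ∀ (c : (addDominating (seymourH n) m).Coloring (Fin q)) (v : Fin 6 × Fin n),
      c (Sum.inl v) ∈ (Finset.univ.image ⇑(emb c))ᶜ := by
    intro c v
    rw [Finset.mem_compl]
    intro hmem'
    obtain ⟨j, -, hj⟩ := Finset.mem_image.mp hmem'
    exact c.valid (show (addDominating (seymourH n) m).Adj (Sum.inl v) (Sum.inr j) from trivial)
      hj.symm
  let F : (addDominating (seymourH n) m).Coloring (Fin q) →
      (Fin m ↪ Fin q) × ((seymourH n).Coloring (Fin 6)) := fun c =>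
    ⟨emb c, SimpleGraph.Coloring.mk
      (fun v => (((Finset.univ.image ⇑(emb c))ᶜ).orderIsoOfFin (hscard (emb c))).symm
        ⟨c (Sum.inl v), hmem c v⟩)
      (by
        intro v w hadj hcontr
        have h2 : (⟨c (Sum.inl v), hmem c v⟩ :
            {y // y ∈ (Finset.univ.image ⇑(emb c))ᶜ}) = ⟨c (Sum.inl w), hmem c w⟩ :=
          (((Finset.univ.image ⇑(emb c))ᶜ).orderIsoOfFin (hscard (emb c))).symm.injective hcontr
        exact c.valid (show (addDominating (seymourH n) m).Adj (Sum.inl v) (Sum.inl w) from hadj)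
          (congrArg Subtype.val h2))⟩
  have hinj : Function.Injective F := by
    intro c c' h
    have h1 : emb c = emb c' := congrArg Prod.fst h
    have h2 : ∀ v : Fin 6 × Fin n, (F c).2 v = (F c').2 v := fun v =>
      DFunLike.congr_fun (congrArg Prod.snd h) v
    apply DFunLike.coe_injective
    funext z
    match z with
    | Sum.inr j =>
      exact congrFun (congrArg (fun e : Fin m ↪ Fin q => (⇑e : Fin m → Fin q)) h1) j
    | Sum.inl v =>
      have hval : ∀ (d : (addDominating (seymourH n) m).Coloring (Fin q)) (v : Fin 6 × Fin n),
          ((Finset.univ.image ⇑(emb d))ᶜ).orderEmbOfFin (hscard (emb d)) ((F d).2 v)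
            = d (Sum.inl v) := by
        intro d v
        have : (F d).2 v = (((Finset.univ.image ⇑(emb d))ᶜ).orderIsoOfFin
            (hscard (emb d))).symm ⟨d (Sum.inl v), hmem d v⟩ := rfl
        rw [this, ← Finset.coe_orderIsoOfFin_apply, OrderIso.apply_symm_apply]
      calc c (Sum.inl v)
          = ((Finset.univ.image ⇑(emb c))ᶜ).orderEmbOfFin (hscard (emb c)) ((F c).2 v) :=
            (hval c v).symm
        _ = ((Finset.univ.image ⇑(emb c))ᶜ).orderEmbOfFin (hscard (emb c)) ((F c').2 v) := by
            rw [h2 v]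
        _ = ((Finset.univ.image ⇑(emb c'))ᶜ).orderEmbOfFin (hscard (emb c')) ((F c').2 v) :=
            congrArg (fun f : Fin m ↪ Fin q =>
              ((Finset.univ.image ⇑f)ᶜ).orderEmbOfFin (hscard f) ((F c').2 v)) h1
        _ = c' (Sum.inl v) := hval c' v
  calc Fintype.card ((addDominating (seymourH n) m).Coloring (Fin q))
      ≤ Fintype.card ((Fin m ↪ Fin q) × ((seymourH n).Coloring (Fin 6))) :=
        Fintype.card_le_of_injective F hinj
    _ = q.descFactorial m * Fintype.card ((seymourH n).Coloring (Fin 6)) := by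
        rw [Fintype.card_prod, Fintype.card_embedding_eq, Fintype.card_fin, Fintype.card_fin]
    _ ≤ q.descFactorial m * (2 ^ 36 * 72 ^ n) :=
        Nat.mul_le_mul_left _ (SeyAux.cardH6_le n)

def SeyAux.pal5 : Fin 6 → Finset (Fin 5) := ![{0}, {1}, {2}, {0,3,4}, {1,3,4}, {2,3,4}]

def SeyAux.pal7 : Fin 6 → Finset (Fin 7) := ![{0,1}, {2,3}, {4,5}, {0,1,6}, {2,3,6}, {4,5,6}]

lemma SeyAux.hd5 : ∀ i j : Fin 6, ((i, j) ∈ seymourPairs ∨ (j, i) ∈ seymourPairs) →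
    Disjoint (SeyAux.pal5 i) (SeyAux.pal5 j) := by decide

lemma SeyAux.hd7 : ∀ i j : Fin 6, ((i, j) ∈ seymourPairs ∨ (j, i) ∈ seymourPairs) →
    Disjoint (SeyAux.pal7 i) (SeyAux.pal7 j) := by decide

lemma SeyAux.hprod5 : ∏ i, (SeyAux.pal5 i).card = 27 := by decide

lemma SeyAux.hprod7 : ∏ i, (SeyAux.pal7 i).card = 216 := by decide

lemma SeyAux.arith (n m U L R : ℕ) (hn : 500 ≤ n)
    (h6 : U ≤ (m + 6).descFactorial m * (2 ^ 36 * 72 ^ n))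
    (h5 : (m + 5).descFactorial m * 27 ^ n ≤ L)
    (h7 : (m + 7).descFactorial m * 216 ^ n ≤ R) :
    U ^ 2 < L * R := by
  set D5 := (m + 5).descFactorial m with hD5def
  set D6 := (m + 6).descFactorial m with hD6def
  set D7 := (m + 7).descFactorial m with hD7def
  have e5 : 120 * D5 = (m + 5).factorial := by
    have := SeyAux.descF_fact m 5
    norm_num [Nat.factorial] at this ⊢
    omega
  have e6 : 720 * D6 = (m + 6).factorial := by
    have := SeyAux.descF_fact m 6
    norm_num [Nat.factorial] at this ⊢
    omega
  have e7 : 5040 * D7 = (m + 7).factorial := by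
    have := SeyAux.descF_fact m 7
    norm_num [Nat.factorial] at this ⊢
    omega
  have hfs6 : (m + 6).factorial = (m + 6) * (m + 5).factorial := by
    have h : m + 6 = (m + 5) + 1 := by omega
    rw [h, Nat.factorial_succ]
  have hfs7 : (m + 7).factorial = (m + 7) * (m + 6).factorial := by
    have h : m + 7 = (m + 6) + 1 := by omega
    rw [h, Nat.factorial_succ]
  have hD6 : 6 * D6 = (m + 6) * D5 := by
    apply Nat.eq_of_mul_eq_mul_left (show 0 < 120 by norm_num)
    calc 120 * (6 * D6) = 720 * D6 := by ring
      _ = (m + 6) * (120 * D5) := by rw [e6, e5, hfs6]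
      _ = 120 * ((m + 6) * D5) := by ring
  have hD7 : 7 * D7 = (m + 7) * D6 := by
    apply Nat.eq_of_mul_eq_mul_left (show 0 < 720 by norm_num)
    calc 720 * (7 * D7) = 5040 * D7 := by ring
      _ = (m + 7) * (720 * D6) := by rw [e7, e6, hfs7]
      _ = 720 * ((m + 7) * D6) := by ring
  have hpos5 : 0 < D5 := by
    have h := Nat.factorial_pos (m + 5)
    rw [← e5] at h
    rcases Nat.eq_zero_or_pos D5 with h0 | h0
    · simp [h0] at h
    · exact h0
  have hpos6 : 0 < D6 := by
    have h := Nat.factorial_pos (m + 6)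
    rw [← e6] at h
    rcases Nat.eq_zero_or_pos D6 with h0 | h0
    · simp [h0] at h
    · exact h0
  have hkey : 2 ^ 74 * 5184 ^ n ≤ 5832 ^ n := SeyAux.pow_key hn
  have hXpos : 0 < (m + 6) * (2 ^ 72 * 5184 ^ n) := by positivity
  have step : 7 * (m + 6) * (2 ^ 72 * 5184 ^ n) < 6 * (m + 7) * 5832 ^ n := by
    calc 7 * (m + 6) * (2 ^ 72 * 5184 ^ n) = 7 * ((m + 6) * (2 ^ 72 * 5184 ^ n)) := by ring
      _ < 24 * ((m + 6) * (2 ^ 72 * 5184 ^ n)) :=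
          (Nat.mul_lt_mul_right hXpos).mpr (by norm_num)
      _ = 6 * (m + 6) * (2 ^ 74 * 5184 ^ n) := by ring
      _ ≤ 6 * (m + 7) * (2 ^ 74 * 5184 ^ n) :=
          Nat.mul_le_mul_right _ (Nat.mul_le_mul_left 6 (by omega))
      _ ≤ 6 * (m + 7) * 5832 ^ n := Nat.mul_le_mul_left _ hkey
  have hPD : 0 < D5 * D6 := Nat.mul_pos hpos5 hpos6
  have big : (D5 * D6) * (7 * (m + 6) * (2 ^ 72 * 5184 ^ n)) <
      (D5 * D6) * (6 * (m + 7) * 5832 ^ n) := (Nat.mul_lt_mul_left hPD).mpr step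
  have l1 : (D5 * D6) * (7 * (m + 6) * (2 ^ 72 * 5184 ^ n)) =
      42 * (D6 * D6 * (2 ^ 72 * 5184 ^ n)) := by
    calc (D5 * D6) * (7 * (m + 6) * (2 ^ 72 * 5184 ^ n))
        = 7 * ((m + 6) * D5) * D6 * (2 ^ 72 * 5184 ^ n) := by ring
      _ = 7 * (6 * D6) * D6 * (2 ^ 72 * 5184 ^ n) := by rw [← hD6]
      _ = 42 * (D6 * D6 * (2 ^ 72 * 5184 ^ n)) := by ring
  have l2 : (D5 * D6) * (6 * (m + 7) * 5832 ^ n) = 42 * (D5 * D7 * 5832 ^ n) := by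
    calc (D5 * D6) * (6 * (m + 7) * 5832 ^ n)
        = 6 * D5 * ((m + 7) * D6) * 5832 ^ n := by ring
      _ = 6 * D5 * (7 * D7) * 5832 ^ n := by rw [← hD7]
      _ = 42 * (D5 * D7 * 5832 ^ n) := by ring
  rw [l1, l2] at big
  have key : D6 * D6 * (2 ^ 72 * 5184 ^ n) < D5 * D7 * 5832 ^ n :=
    Nat.lt_of_mul_lt_mul_left big
  calc U ^ 2 ≤ (D6 * (2 ^ 36 * 72 ^ n)) ^ 2 := Nat.pow_le_pow_left h6 2
    _ = D6 * D6 * (2 ^ 72 * 5184 ^ n) := by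
        have h72 : (72 : ℕ) ^ n * 72 ^ n = 5184 ^ n := by
          rw [← mul_pow]; norm_num
        calc (D6 * (2 ^ 36 * 72 ^ n)) ^ 2
            = D6 * D6 * ((2 ^ 36 * 2 ^ 36) * (72 ^ n * 72 ^ n)) := by ring
          _ = D6 * D6 * (2 ^ 72 * 5184 ^ n) := by rw [h72]; norm_num
    _ < D5 * D7 * 5832 ^ n := key
    _ = D5 * 27 ^ n * (D7 * 216 ^ n) := by
        have h27 : (27 : ℕ) ^ n * 216 ^ n = 5832 ^ n := by rw [← mul_pow]; norm_num
        calc D5 * D7 * 5832 ^ n = D5 * D7 * (27 ^ n * 216 ^ n) := by rw [h27]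
          _ = D5 * 27 ^ n * (D7 * 216 ^ n) := by ring
    _ ≤ L * R := Nat.mul_le_mul h5 h7

/-- For all sufficiently large `n`, the graph `S_n` (which has maximum degree
`n² - 1`) violates log-concavity of the number of proper colorings at `q = n² - 6n + 6`:
`P_{S_n}(n² - 6n + 5) · P_{S_n}(n² - 6n + 7) > P_{S_n}(n² - 6n + 6)²`. -/
theorem seymourS_not_log_concave :
    ∃ N : ℕ, ∀ n : ℕ, N ≤ n →
      Fintype.card ((seymourS n).Coloring (Fin (n ^ 2 - 6 * n + 6))) ^ 2 <
        Fintype.card ((seymourS n).Coloring (Fin (n ^ 2 - 6 * n + 5))) *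
          Fintype.card ((seymourS n).Coloring (Fin (n ^ 2 - 6 * n + 7))) := by
  refine ⟨500, fun n hn => ?_⟩
  have h5 := SeyAux.lower_S n (n ^ 2 - 6 * n) 5 (n ^ 2 - 6 * n + 5) rfl SeyAux.pal5 SeyAux.hd5
  have h7 := SeyAux.lower_S n (n ^ 2 - 6 * n) 7 (n ^ 2 - 6 * n + 7) rfl SeyAux.pal7 SeyAux.hd7
  have h6 := SeyAux.upper_S n (n ^ 2 - 6 * n) (n ^ 2 - 6 * n + 6) rfl
  rw [SeyAux.hprod5] at h5
  rw [SeyAux.hprod7] at h7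
  exact SeyAux.arith n (n ^ 2 - 6 * n) _ _ _ hn h6 h5 h7
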